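/- In an abelian category with enough injectives in which every object has finite length, every object admits an injective envelope. -/

import Mathlib

open CategoryTheory Limits

/-- An object of an abelian category has finite length if it is zero or is an extension of
a simple object by an object of finite length (i.e. it admits a finite composition series). -/
inductive FiniteLength {A : Type*} [Category A] [Abelian A] : A → Prop
  | of_isZero {X : A} : IsZero X → FiniteLength X
  | of_extension {X Y : A} (i : X ⟶ Y) :
      Mono i → Simple (cokernel i) → FiniteLength X → FiniteLength Y

/-- A monomorphism `f : X ⟶ I` is an essential extension if every nonzero subobject of `I`
meets the image of `X` nontrivially. -/
def IsEssentialExtension {A : Type*} [Category A] [Abelian A] {X I : A} (f : X ⟶ I) : Prop :=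
  ∀ (S : A) (j : S ⟶ I), Mono j → ¬ IsZero S → ¬ IsZero (pullback j f)

section Helpers

variable {A : Type*} [Category A] [Abelian A]

lemma isZero_of_mono_zero {S T : A} (j : S ⟶ T) [Mono j] (hj : j = 0) : IsZero S := by
  rw [IsZero.iff_id_eq_zero]
  apply (cancel_mono j).1
  simp [hj]

lemma isEssential_of_isIso {X I : A} (f : X ⟶ I) [IsIso f] : IsEssentialExtension f := by
  intro S j hj hS hz
  haveI := hj
  apply hS
  have comm : 𝟙 S ≫ j = (j ≫ inv f) ≫ f := by simp
  have hl : (pullback.lift (𝟙 S) (j ≫ inv f) comm : S ⟶ pullback j f) ≫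
      pullback.fst j f = 𝟙 S := pullback.lift_fst _ _ _
  haveI : Mono (pullback.lift (𝟙 S) (j ≫ inv f) comm : S ⟶ pullback j f) :=
    mono_of_mono_fac hl
  exact IsZero.of_mono (pullback.lift (𝟙 S) (j ≫ inv f) comm) hz

lemma IsEssentialExtension.comp {X Y Z : A} {f : X ⟶ Y} {g : Y ⟶ Z} [Mono g]
    (hf : IsEssentialExtension f) (hg : IsEssentialExtension g) :
    IsEssentialExtension (f ≫ g) := by
  intro S j hj hS
  haveI := hj
  have h1 : ¬ IsZero (pullback j g) := hg S j hj hS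
  have h2 : ¬ IsZero (pullback (pullback.snd j g) f) :=
    hf _ _ inferInstance h1
  intro hz
  apply h2
  have comm : (pullback.fst (pullback.snd j g) f ≫ pullback.fst j g) ≫ j =
      pullback.snd (pullback.snd j g) f ≫ (f ≫ g) := by
    rw [Category.assoc, pullback.condition, ← Category.assoc, pullback.condition,
      Category.assoc]
  have hl : (pullback.lift _ _ comm : pullback (pullback.snd j g) f ⟶ pullback j (f ≫ g)) ≫
      pullback.snd j (f ≫ g) = pullback.snd (pullback.snd j g) f := pullback.lift_snd _ _ _
  haveI : Mono (pullback.lift _ _ comm : pullback (pullback.snd j g) f ⟶ pullback j (f ≫ g)) :=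
    mono_of_mono_fac hl
  exact IsZero.of_mono (pullback.lift _ _ comm) hz

end Helpers

section Exchange

open CategoryTheory.Abelian CategoryTheory.Abelian.Pseudoelement
open scoped Pseudoelement

variable {A : Type*} [Category A] [Abelian A]

lemma exchange {X Y : A} (i : X ⟶ Y) [Mono i] (S T : Subobject Y) (hST : S ≤ T)
    (hp : Subobject.mk (pullback.snd T.arrow i) ≤ Subobject.mk (pullback.snd S.arrow i))
    (hq : Subobject.mk (Limits.image.ι (T.arrow ≫ cokernel.π i)) ≤
      Subobject.mk (Limits.image.ι (S.arrow ≫ cokernel.π i))) :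
    T ≤ S := by
  set π := cokernel.π i with hπ
  set k := Subobject.ofLE S T hST with hkdef
  have hk : k ≫ T.arrow = S.arrow := Subobject.ofLE_arrow hST
  have hepi : Epi k := by
    apply epi_of_pseudo_surjective
    intro tt
    -- move tt to the image of T.arrow ≫ π and down to image of S.arrow ≫ π
    set wq : Limits.image (T.arrow ≫ π) ⟶ Limits.image (S.arrow ≫ π) :=
      Subobject.ofMkLEMk _ _ hq with hwq
    obtain ⟨ss, hss⟩ := pseudo_surjective_of_epi (factorThruImage (S.arrow ≫ π))
      (wq ((factorThruImage (T.arrow ≫ π)) tt))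
    have e1 : (S.arrow ≫ π) ss = (T.arrow ≫ π) tt := by
      conv_lhs => rw [← Limits.image.fac (S.arrow ≫ π)]
      conv_rhs => rw [← Limits.image.fac (T.arrow ≫ π)]
      rw [Pseudoelement.comp_apply, Pseudoelement.comp_apply, hss, ← Pseudoelement.comp_apply, hwq, Subobject.ofMkLEMk_comp hq]
    have e2 : (T.arrow ≫ π) tt = (T.arrow ≫ π) (k ss) := by
      rw [← e1, ← Pseudoelement.comp_apply, ← Category.assoc, hk]
    obtain ⟨c, hc0, hc⟩ := sub_of_eq_image (T.arrow ≫ π) tt (k ss) e2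
    -- c maps to kernel of π, i.e. to X
    have hc0' : π (T.arrow c) = 0 := by rw [← Pseudoelement.comp_apply]; exact hc0
    obtain ⟨x, hx⟩ := pseudo_exact_of_exact (ShortComplex.exact_cokernel i)
      (T.arrow c) hc0'
    have hx' : pseudoApply i x = pseudoApply T.arrow c := hx
    obtain ⟨s0, hs0f, hs0s⟩ := pseudo_pullback (f := T.arrow) (g := i)
      (p := c) (q := x) (by rw [hx'])
    set wp : pullback T.arrow i ⟶ pullback S.arrow i := Subobject.ofMkLEMk _ _ hp with hwp
    set ss2 := (pullback.fst S.arrow i) (wp s0) with hss2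
    have hwpsnd : pseudoApply (pullback.snd S.arrow i) (pseudoApply wp s0) = x := by
      rw [← Pseudoelement.comp_apply, hwp, Subobject.ofMkLEMk_comp hp, hs0s]
    have hS2 : S.arrow ss2 = T.arrow c := by
      rw [hss2, ← Pseudoelement.comp_apply, pullback.condition, Pseudoelement.comp_apply,
        hwpsnd, hx']
    have hk2 : k ss2 = c := by
      apply pseudo_injective_of_mono T.arrow
      rw [← Pseudoelement.comp_apply, hk, hS2]
    have hgc : (cokernel.π k) tt = 0 := by
      have h1 : (cokernel.π k) (k ss) = 0 := by
        rw [← Pseudoelement.comp_apply, cokernel.condition, Pseudoelement.zero_apply]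
      have h2 := hc _ (cokernel.π k) h1
      rw [← h2, ← hk2, ← Pseudoelement.comp_apply, cokernel.condition, Pseudoelement.zero_apply]
    obtain ⟨a, ha⟩ := pseudo_exact_of_exact (ShortComplex.exact_cokernel k) tt hgc
    exact ⟨a, ha⟩
  haveI : IsIso k := isIso_of_mono_of_epi k
  exact Subobject.le_of_comm (inv k) (by rw [IsIso.inv_comp_eq, hk])

end Exchange

section WF

variable {A : Type*} [Category A] [Abelian A]

lemma pfun_monotone {X Y : A} (i : X ⟶ Y) [Mono i] {S T : Subobject Y} (h : S ≤ T) :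
    Subobject.mk (pullback.snd S.arrow i) ≤ Subobject.mk (pullback.snd T.arrow i) :=
  Subobject.mk_le_mk_of_comm
    (pullback.lift (pullback.fst _ _ ≫ Subobject.ofLE S T h) (pullback.snd _ _)
      (by rw [Category.assoc, Subobject.ofLE_arrow, pullback.condition]))
    (pullback.lift_snd _ _ _)

lemma qfun_monotone {X Y : A} (i : X ⟶ Y) [Mono i] {S T : Subobject Y} (h : S ≤ T) :
    Subobject.mk (Limits.image.ι (S.arrow ≫ cokernel.π i)) ≤
      Subobject.mk (Limits.image.ι (T.arrow ≫ cokernel.π i)) := by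
  have fac : (Subobject.ofLE S T h ≫ factorThruImage (T.arrow ≫ cokernel.π i)) ≫
      Limits.image.ι (T.arrow ≫ cokernel.π i) = S.arrow ≫ cokernel.π i := by
    rw [Category.assoc, Limits.image.fac, ← Category.assoc, Subobject.ofLE_arrow]
  exact Subobject.mk_le_mk_of_comm
    (Limits.image.lift ⟨_, Limits.image.ι (T.arrow ≫ cokernel.π i), _, fac⟩)
    (Limits.image.lift_fac _)

lemma wf_of_isZero {Y : A} (h : IsZero Y) :
    WellFounded ((· > ·) : Subobject Y → Subobject Y → Prop) := by
  have hle : ∀ S T : Subobject Y, S ≤ T := fun S T =>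
    Subobject.le_of_comm 0 (h.eq_of_tgt _ _)
  constructor
  intro a
  constructor
  intro b hb
  exact absurd (hle b a) (not_le_of_gt hb)

lemma wf_of_simpleOrder {α : Type*} [PartialOrder α] [BoundedOrder α] [IsSimpleOrder α] :
    WellFounded ((· > ·) : α → α → Prop) := by
  have htop : Acc ((· > ·) : α → α → Prop) ⊤ := by
    constructor
    intro b hb
    exact absurd hb not_top_lt
  constructor
  intro a
  rcases IsSimpleOrder.eq_bot_or_eq_top a with rfl | rfl
  · constructor
    intro b hb
    rcases IsSimpleOrder.eq_bot_or_eq_top b with rfl | rfl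
    · exact absurd hb (lt_irrefl _)
    · exact htop
  · exact htop

lemma wf_of_extension {X Y : A} (i : X ⟶ Y) [Mono i]
    (hX : WellFounded ((· > ·) : Subobject X → Subobject X → Prop))
    (hC : WellFounded ((· > ·) : Subobject (cokernel i) → Subobject (cokernel i) → Prop)) :
    WellFounded ((· > ·) : Subobject Y → Subobject Y → Prop) := by
  have wfprod := hX.prod_lex hC
  have key := InvImage.wf (fun S : Subobject Y =>
      (Subobject.mk (pullback.snd S.arrow i),
        Subobject.mk (Limits.image.ι (S.arrow ≫ cokernel.π i)))) wfprod
  refine Subrelation.wf ?_ key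
  intro T S hTS
  have hST : S ≤ T := le_of_lt hTS
  have hple := pfun_monotone i hST
  have hqle := qfun_monotone i hST
  rcases lt_or_eq_of_le hple with hplt | hpeq
  · exact Prod.Lex.left _ _ hplt
  · rcases lt_or_eq_of_le hqle with hqlt | hqeq
    · dsimp only [InvImage]
      rw [← hpeq]
      exact Prod.Lex.right _ hqlt
    · exfalso
      have := exchange i S T hST (le_of_eq hpeq.symm) (le_of_eq hqeq.symm)
      exact absurd (lt_of_lt_of_le hTS this) (lt_irrefl _)

lemma wf_of_finiteLength {Y : A} (h : FiniteLength Y) :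
    WellFounded ((· > ·) : Subobject Y → Subobject Y → Prop) := by
  induction h with
  | of_isZero h => exact wf_of_isZero h
  | of_extension i hm hs _ ih =>
      haveI := hm
      haveI := hs
      exact wf_of_extension i ih wf_of_simpleOrder

end WF

lemma exists_maximal {α : Type*} [PartialOrder α]
    (wf : WellFounded ((· > ·) : α → α → Prop)) (s : Set α) (hs : s.Nonempty) :
    ∃ m ∈ s, ∀ x ∈ s, ¬ m < x := by
  obtain ⟨m, hm, h⟩ := wf.has_min s hs
  exact ⟨m, hm, fun x hx hlt => h x hx hlt⟩


/-- In an abelian category with enough injectives in which every object has finite length,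
every object admits an injective envelope. -/
theorem stmt2 {A : Type*} [Category A] [Abelian A] [EnoughInjectives A]
    (hfl : ∀ X : A, FiniteLength X) (X : A) :
    ∃ (I : A) (f : X ⟶ I), Mono f ∧ Injective I ∧ IsEssentialExtension f := by
  classical
  set I := Injective.under X with hI
  set u : X ⟶ I := Injective.ι X with hu
  have wfI := wf_of_finiteLength (hfl I)
  set P : Set (Subobject I) :=
    {Q | ∃ h : Subobject.mk u ≤ Q, IsEssentialExtension (Subobject.ofMkLE u Q h)} with hP
  have hmkuP : Subobject.mk u ∈ P := by
    refine ⟨le_refl _, ?_⟩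
    have hv : Subobject.ofMkLE u (Subobject.mk u) (le_refl _) =
        (Subobject.underlyingIso u).inv := by
      apply (cancel_mono (Subobject.mk u).arrow).1
      rw [Subobject.ofMkLE_arrow, Subobject.underlyingIso_arrow]
    rw [hv]
    exact isEssential_of_isIso _
  obtain ⟨E, ⟨hE, hEess⟩, hEmax⟩ := exists_maximal wfI P ⟨_, hmkuP⟩
  set xe : X ⟶ (E : A) := Subobject.ofMkLE u E hE with hxe
  have hxea : xe ≫ E.arrow = u := Subobject.ofMkLE_arrow hE
  haveI hxemono : Mono xe := mono_of_mono_fac hxea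
  -- E has no proper essential extension
  have key : ∀ (E' : A) (f : (E : A) ⟶ E'), Mono f → IsEssentialExtension f → IsIso f := by
    intro E' f hf hfess
    haveI := hf
    set g : E' ⟶ I := Injective.factorThru E.arrow f with hg
    have hfg : f ≫ g = E.arrow := Injective.comp_factorThru _ _
    haveI hgm : Mono g := by
      apply Preadditive.mono_of_kernel_zero
      by_contra hker
      have hK : ¬ IsZero (kernel g) := fun h => hker (h.eq_of_src _ _)
      apply hfess (kernel g) (kernel.ι g) inferInstance hK
      have h0 : pullback.snd (kernel.ι g) f = 0 := by
        apply (cancel_mono E.arrow).1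
        rw [← hfg, ← Category.assoc, ← pullback.condition, Category.assoc,
          kernel.condition, comp_zero, zero_comp]
      exact isZero_of_mono_zero _ h0
    have hEQ : E ≤ Subobject.mk g := Subobject.le_mk_of_comm f hfg
    have h1 : Subobject.mk u ≤ Subobject.mk g := le_trans hE hEQ
    have hQP : Subobject.mk g ∈ P := by
      refine ⟨h1, ?_⟩
      have hcompeq : Subobject.ofMkLE u (Subobject.mk g) h1 =
          (xe ≫ f) ≫ (Subobject.underlyingIso g).inv := by
        apply (cancel_mono (Subobject.mk g).arrow).1
        rw [Subobject.ofMkLE_arrow, Category.assoc, Category.assoc,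
          Subobject.underlyingIso_arrow, hfg, hxea]
      rw [hcompeq]
      exact IsEssentialExtension.comp (IsEssentialExtension.comp hEess hfess)
        (isEssential_of_isIso _)
    have heq : E = Subobject.mk g := by
      rcases lt_or_eq_of_le hEQ with hlt | heq
      · exact absurd hlt (hEmax _ hQP)
      · exact heq
    set v : E' ⟶ (E : A) := Subobject.ofMkLE g E (le_of_eq heq.symm) with hv
    have hva : v ≫ E.arrow = g := Subobject.ofMkLE_arrow _
    refine ⟨v, ?_, ?_⟩
    · apply (cancel_mono E.arrow).1
      rw [Category.assoc, hva, hfg, Category.id_comp]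
    · apply (cancel_mono g).1
      rw [Category.assoc, hfg, hva, Category.id_comp]
  -- choose a complement-like maximal C with C ⊓ E = 0
  set R : Set (Subobject I) := {C | IsZero (pullback C.arrow E.arrow)} with hR
  have hbotR : (⊥ : Subobject I) ∈ R := by
    have hbz : IsZero ((⊥ : Subobject I) : A) :=
      (isZero_zero A).of_iso Subobject.botCoeIsoZero
    exact IsZero.of_mono (pullback.fst (⊥ : Subobject I).arrow E.arrow) hbz
  obtain ⟨C, hC, hCmax⟩ := exists_maximal wfI R ⟨⊥, hbotR⟩
  set π : I ⟶ cokernel C.arrow := cokernel.π C.arrow with hπ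
  set φ : (E : A) ⟶ cokernel C.arrow := E.arrow ≫ π with hφ
  haveI hφm : Mono φ := by
    apply Preadditive.mono_of_kernel_zero
    have hl := Abelian.monoLift_comp C.arrow (kernel.ι φ ≫ E.arrow)
      (by rw [Category.assoc, ← hφ, kernel.condition])
    set m : kernel φ ⟶ pullback C.arrow E.arrow :=
      pullback.lift _ _ hl with hm
    have : kernel.ι φ = m ≫ pullback.snd C.arrow E.arrow := by
      rw [hm, pullback.lift_snd]
    rw [this, hC.eq_of_tgt m 0, zero_comp]
  have hφess : IsEssentialExtension φ := by
    intro S j hj hS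
    haveI := hj
    set snd' := pullback.snd j π with hsnd'
    set T' : Subobject I := Subobject.mk snd' with hT'
    have hCT : C ≤ T' := by
      refine Subobject.le_mk_of_comm
        (pullback.lift 0 C.arrow (by rw [zero_comp, hπ, cokernel.condition])) ?_
      rw [pullback.lift_snd]
    have hCneT : C ≠ T' := by
      intro heq
      set v := Subobject.ofMkLE snd' C (le_of_eq heq.symm) with hv
      have hva : v ≫ C.arrow = snd' := Subobject.ofMkLE_arrow _
      have hj0 : pullback.fst j π ≫ j = 0 := by
        rw [pullback.condition]
        show snd' ≫ π = 0
        rw [← hva, Category.assoc]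
        show v ≫ C.arrow ≫ cokernel.π C.arrow = 0
        rw [cokernel.condition, comp_zero]
      haveI : Epi (pullback.fst j π) := inferInstance
      exact hS (isZero_of_mono_zero j (zero_of_epi_comp _ hj0))
    have hDnz : ¬ IsZero (pullback T'.arrow E.arrow) :=
      fun hz => hCmax T' hz (lt_of_le_of_ne hCT hCneT)
    intro hzero
    apply hDnz
    have harr : T'.arrow = (Subobject.underlyingIso snd').hom ≫ snd' := by
      rw [← Iso.inv_comp_eq, Subobject.underlyingIso_arrow]
    set ρ : (T' : A) ⟶ S := (Subobject.underlyingIso snd').hom ≫ pullback.fst j π with hρ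
    have hρj : ρ ≫ j = T'.arrow ≫ π := by
      rw [hρ, Category.assoc, pullback.condition, harr, Category.assoc]
    have comm : (pullback.fst T'.arrow E.arrow ≫ ρ) ≫ j =
        pullback.snd T'.arrow E.arrow ≫ φ := by
      rw [Category.assoc, hρj, ← Category.assoc, pullback.condition, hφ, Category.assoc]
    have hlsnd : (pullback.lift _ _ comm : pullback T'.arrow E.arrow ⟶ pullback j φ) ≫
        pullback.snd j φ = pullback.snd T'.arrow E.arrow := pullback.lift_snd _ _ _
    haveI : Mono (pullback.lift _ _ comm : pullback T'.arrow E.arrow ⟶ pullback j φ) :=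
      mono_of_mono_fac hlsnd
    exact IsZero.of_mono (pullback.lift _ _ comm) hzero
  haveI hφiso : IsIso φ := key _ φ hφm hφess
  have hret : E.arrow ≫ π ≫ inv φ = 𝟙 (E : A) := by
    rw [← Category.assoc, ← hφ, IsIso.hom_inv_id]
  have hinj : Injective (E : A) := by
    constructor
    intro X' Y' g' f' hf'
    haveI := hf'
    refine ⟨Injective.factorThru (g' ≫ E.arrow) f' ≫ π ≫ inv φ, ?_⟩
    rw [← Category.assoc, Injective.comp_factorThru, Category.assoc, hret, Category.comp_id]
  exact ⟨(E : A), xe, hxemono, hinj, hEess⟩
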